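/- arXiv:1912.10391 — 2 statements merged into one kernel-verified Lean document; each statement's English description precedes it below -/
import Mathlib

section
/- Let C be a conjugation on H and let p ∈ [1, ∞). For every T ∈ S_C belonging to the Schatten p-class B_p(H) and every ε > 0, there exists a finite-rank operator F ∈ S_C with ‖T − F‖_p < ε, where ‖·‖_p is the Schatten p-norm. Likewise, for every compact T ∈ S_C and every ε > 0 there exists a finite-rank operator F ∈ S_C with ‖T − F‖ < ε in the operator norm. -/
def IsConjugation {H : Type*} [NormedAddCommGroup H] [InnerProductSpace ℂ H]
    (C : H → H) : Prop :=
  (∀ x y, C (x + y) = C x + C y) ∧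
  (∀ (a : ℂ) (x : H), C (a • x) = (starRingEnd ℂ a) • C x) ∧
  (∀ x, C (C x) = x) ∧
  (∀ x y : H, (inner ℂ (C x) (C y) : ℂ) = inner ℂ y x)

/-- The set `S_C` of `C`-symmetric bounded operators: `C T C = T*`. -/
def SC {H : Type*} [NormedAddCommGroup H] [InnerProductSpace ℂ H] [CompleteSpace H]
    (C : H → H) : Set (H →L[ℂ] H) :=
  {T | ∀ x : H, C (T (C x)) = ContinuousLinearMap.adjoint T x}

/-- The Jordan product `A ∘ B = (AB + BA)/2`. -/
noncomputable def jmul {H : Type*} [NormedAddCommGroup H] [InnerProductSpace ℂ H]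
    [CompleteSpace H] (A B : H →L[ℂ] H) : H →L[ℂ] H :=
  (2 : ℂ)⁻¹ • (A * B + B * A)

namespace IsConjugation

variable {H : Type*} [NormedAddCommGroup H] [InnerProductSpace ℂ H]
variable {C : H → H}

lemma add (hC : IsConjugation C) (x y : H) : C (x + y) = C x + C y := hC.1 x y
lemma smulc (hC : IsConjugation C) (a : ℂ) (x : H) :
    C (a • x) = (starRingEnd ℂ a) • C x := hC.2.1 a x
lemma invol (hC : IsConjugation C) (x : H) : C (C x) = x := hC.2.2.1 x
lemma inner_eq (hC : IsConjugation C) (x y : H) :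
    (inner ℂ (C x) (C y) : ℂ) = inner ℂ y x := hC.2.2.2 x y

lemma map_zero (hC : IsConjugation C) : C 0 = 0 := by
  have := hC.smulc 0 0
  simpa using this

lemma map_sub (hC : IsConjugation C) (x y : H) : C (x - y) = C x - C y := by
  have h := hC.add (x - y) y
  rw [sub_add_cancel] at h
  rw [eq_sub_iff_add_eq, ← h]

lemma norm_map (hC : IsConjugation C) (x : H) : ‖C x‖ = ‖x‖ := by
  have h : (inner ℂ (C x) (C x) : ℂ) = inner ℂ x x := hC.inner_eq x x
  rw [inner_self_eq_norm_sq_to_K, inner_self_eq_norm_sq_to_K] at h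
  have h2 : ‖C x‖ ^ 2 = ‖x‖ ^ 2 := by exact_mod_cast h
  nlinarith [norm_nonneg (C x), norm_nonneg x]

end IsConjugation


set_option linter.unusedSectionVars false

section CAC

variable {H : Type*} [NormedAddCommGroup H] [InnerProductSpace ℂ H] [CompleteSpace H]
variable {C : H → H}

open ContinuousLinearMap

/-- The (linear) operator `x ↦ C (A (C x))`. -/
noncomputable def cacCLM (hC : IsConjugation C) (A : H →L[ℂ] H) : H →L[ℂ] H :=
  LinearMap.mkContinuous
    { toFun := fun x => C (A (C x))
      map_add' := fun x y => by
        show C (A (C (x + y))) = C (A (C x)) + C (A (C y))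
        rw [hC.add, map_add, hC.add]
      map_smul' := fun a x => by
        show C (A (C (a • x))) = (RingHom.id ℂ) a • C (A (C x))
        rw [hC.smulc, map_smul, hC.smulc]
        simp }
    ‖A‖ (fun x => by
      show ‖C (A (C x))‖ ≤ ‖A‖ * ‖x‖
      rw [hC.norm_map]
      calc ‖A (C x)‖ ≤ ‖A‖ * ‖C x‖ := A.le_opNorm _
        _ = ‖A‖ * ‖x‖ := by rw [hC.norm_map])

lemma cacCLM_apply (hC : IsConjugation C) (A : H →L[ℂ] H) (x : H) :
    cacCLM hC A x = C (A (C x)) := rfl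

lemma norm_cacCLM_le (hC : IsConjugation C) (A : H →L[ℂ] H) :
    ‖cacCLM hC A‖ ≤ ‖A‖ :=
  LinearMap.mkContinuous_norm_le _ (norm_nonneg A) _

lemma cacCLM_cacCLM (hC : IsConjugation C) (A : H →L[ℂ] H) :
    cacCLM hC (cacCLM hC A) = A := by
  ext x
  simp [cacCLM_apply, hC.invol]

lemma cacCLM_sub (hC : IsConjugation C) (A B : H →L[ℂ] H) :
    cacCLM hC (A - B) = cacCLM hC A - cacCLM hC B := by
  ext x
  simp [cacCLM_apply, hC.map_sub]

lemma cacCLM_add (hC : IsConjugation C) (A B : H →L[ℂ] H) :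
    cacCLM hC (A + B) = cacCLM hC A + cacCLM hC B := by
  ext x
  simp [cacCLM_apply, hC.add]

lemma adjoint_cacCLM (hC : IsConjugation C) (A : H →L[ℂ] H) :
    cacCLM hC (adjoint A) = adjoint (cacCLM hC A) := by
  rw [eq_adjoint_iff]
  intro x y
  rw [cacCLM_apply, cacCLM_apply]
  calc (inner ℂ (C (adjoint A (C x))) y : ℂ)
      = inner ℂ (C (adjoint A (C x))) (C (C y)) := by rw [hC.invol]
    _ = inner ℂ (C y) (adjoint A (C x)) := hC.inner_eq _ _
    _ = inner ℂ (A (C y)) (C x) := adjoint_inner_right _ _ _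
    _ = inner ℂ (C (C (A (C y)))) (C x) := by rw [hC.invol]
    _ = inner ℂ x (C (A (C y))) := hC.inner_eq _ _

end CAC


section Symm

variable {H : Type*} [NormedAddCommGroup H] [InnerProductSpace ℂ H] [CompleteSpace H]
variable {C : H → H}

open ContinuousLinearMap

lemma mem_SC_iff (hC : IsConjugation C) (T : H →L[ℂ] H) :
    T ∈ SC C ↔ cacCLM hC T = adjoint T := by
  constructor
  · intro h; ext x; exact h x
  · intro h x
    have := congrFun (congrArg (fun (S : H →L[ℂ] H) => (S : H → H)) h) x
    exact this

lemma cacCLM_smul (hC : IsConjugation C) (a : ℂ) (A : H →L[ℂ] H) :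
    cacCLM hC (a • A) = (starRingEnd ℂ a) • cacCLM hC A := by
  ext x
  simp [cacCLM_apply, hC.smulc]

/-- The symmetrization of `G` with respect to `C`. -/
noncomputable def symmOp (hC : IsConjugation C) (G : H →L[ℂ] H) : H →L[ℂ] H :=
  (2 : ℂ)⁻¹ • (G + cacCLM hC (adjoint G))

lemma symmOp_mem_SC (hC : IsConjugation C) (G : H →L[ℂ] H) : symmOp hC G ∈ SC C := by
  rw [mem_SC_iff hC]
  rw [symmOp, cacCLM_smul, cacCLM_add, cacCLM_cacCLM]
  rw [map_smulₛₗ, map_add]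
  rw [← adjoint_cacCLM, adjoint_adjoint]
  simp [add_comm]

lemma sub_symmOp (hC : IsConjugation C) {T : H →L[ℂ] H} (hT : T ∈ SC C) (G : H →L[ℂ] H) :
    T - symmOp hC G = (2 : ℂ)⁻¹ • ((T - G) + cacCLM hC (adjoint (T - G))) := by
  have hTs : cacCLM hC (adjoint T) = T := by
    rw [← (mem_SC_iff hC T).mp hT, cacCLM_cacCLM]
  rw [map_sub, cacCLM_sub, hTs, symmOp]
  module

lemma norm_sub_symmOp_le (hC : IsConjugation C) {T : H →L[ℂ] H} (hT : T ∈ SC C)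
    (G : H →L[ℂ] H) : ‖T - symmOp hC G‖ ≤ ‖T - G‖ := by
  rw [sub_symmOp hC hT G]
  have hadj : ‖adjoint (T - G)‖ = ‖T - G‖ :=
    (ContinuousLinearMap.adjoint : (H →L[ℂ] H) ≃ₗᵢ⋆[ℂ] (H →L[ℂ] H)).norm_map (T - G)
  calc ‖(2 : ℂ)⁻¹ • ((T - G) + cacCLM hC (adjoint (T - G)))‖
      = ‖(2 : ℂ)⁻¹‖ * ‖(T - G) + cacCLM hC (adjoint (T - G))‖ := norm_smul _ _
    _ ≤ ‖(2 : ℂ)⁻¹‖ * (‖T - G‖ + ‖cacCLM hC (adjoint (T - G))‖) := by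
        gcongr; exact norm_add_le _ _
    _ ≤ ‖(2 : ℂ)⁻¹‖ * (‖T - G‖ + ‖T - G‖) := by
        gcongr
        exact (norm_cacCLM_le hC _).trans (le_of_eq hadj)
    _ = ‖T - G‖ := by
        simp [norm_inv]
        norm_num
        ring

end Symm

/-- A finite-rank bounded operator. -/
def IsFiniteRank {H : Type*} [NormedAddCommGroup H] [InnerProductSpace ℂ H]
    (F : H →L[ℂ] H) : Prop :=
  FiniteDimensional ℂ (LinearMap.range (F : H →ₗ[ℂ] H))

section Rank

variable {H : Type*} [NormedAddCommGroup H] [InnerProductSpace ℂ H] [CompleteSpace H]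
variable {C : H → H}

open ContinuousLinearMap Module

/-- Rank at most `n`. -/
def RankLE (F : H →L[ℂ] H) (n : ℕ) : Prop :=
  IsFiniteRank F ∧ Module.finrank ℂ (LinearMap.range (F : H →ₗ[ℂ] H)) ≤ n

lemma rankLE_of_le {A : H →L[ℂ] H} {V : Submodule ℂ H} [FiniteDimensional ℂ V]
    (h : LinearMap.range (A : H →ₗ[ℂ] H) ≤ V) :
    IsFiniteRank A ∧
      Module.finrank ℂ (LinearMap.range (A : H →ₗ[ℂ] H)) ≤ Module.finrank ℂ V := by
  haveI : FiniteDimensional ℂ (LinearMap.range (A : H →ₗ[ℂ] H)) :=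
    Submodule.finiteDimensional_of_le h
  exact ⟨this, Submodule.finrank_mono h⟩

lemma rankLE_zero (n : ℕ) : RankLE (0 : H →L[ℂ] H) n := by
  constructor
  · unfold IsFiniteRank
    have : LinearMap.range ((0 : H →L[ℂ] H) : H →ₗ[ℂ] H) = ⊥ := by
      rw [ContinuousLinearMap.coe_zero, LinearMap.range_zero]
    rw [this]
    infer_instance
  · have : LinearMap.range ((0 : H →L[ℂ] H) : H →ₗ[ℂ] H) = ⊥ := by
      rw [ContinuousLinearMap.coe_zero, LinearMap.range_zero]
    rw [this, finrank_bot]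
    exact Nat.zero_le n

lemma rankLE_sub {A B : H →L[ℂ] H} {m n : ℕ} (hA : RankLE A m) (hB : RankLE B n) :
    RankLE (A - B) (m + n) := by
  obtain ⟨hAfd, hAm⟩ := hA
  obtain ⟨hBfd, hBn⟩ := hB
  haveI : FiniteDimensional ℂ (LinearMap.range (A : H →ₗ[ℂ] H)) := hAfd
  haveI : FiniteDimensional ℂ (LinearMap.range (B : H →ₗ[ℂ] H)) := hBfd
  set VA := LinearMap.range (A : H →ₗ[ℂ] H)
  set VB := LinearMap.range (B : H →ₗ[ℂ] H)
  have hle : LinearMap.range ((A - B : H →L[ℂ] H) : H →ₗ[ℂ] H) ≤ VA ⊔ VB := by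
    rintro _ ⟨x, rfl⟩
    have : ((A - B : H →L[ℂ] H) : H →ₗ[ℂ] H) x = A x - B x := by simp
    rw [this]
    exact Submodule.sub_mem_sup ⟨x, rfl⟩ ⟨x, rfl⟩
  haveI : FiniteDimensional ℂ (VA ⊔ VB : Submodule ℂ H) := inferInstance
  obtain ⟨hfd, hfr⟩ := rankLE_of_le hle
  refine ⟨hfd, hfr.trans ?_⟩
  exact (Submodule.finrank_add_le_finrank_add_finrank VA VB).trans (add_le_add hAm hBn)

lemma rankLE_add {A B : H →L[ℂ] H} {m n : ℕ} (hA : RankLE A m) (hB : RankLE B n) :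
    RankLE (A + B) (m + n) := by
  obtain ⟨hAfd, hAm⟩ := hA
  obtain ⟨hBfd, hBn⟩ := hB
  haveI : FiniteDimensional ℂ (LinearMap.range (A : H →ₗ[ℂ] H)) := hAfd
  haveI : FiniteDimensional ℂ (LinearMap.range (B : H →ₗ[ℂ] H)) := hBfd
  set VA := LinearMap.range (A : H →ₗ[ℂ] H)
  set VB := LinearMap.range (B : H →ₗ[ℂ] H)
  have hle : LinearMap.range ((A + B : H →L[ℂ] H) : H →ₗ[ℂ] H) ≤ VA ⊔ VB := by
    rintro _ ⟨x, rfl⟩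
    have : ((A + B : H →L[ℂ] H) : H →ₗ[ℂ] H) x = A x + B x := by simp
    rw [this]
    exact Submodule.add_mem_sup ⟨x, rfl⟩ ⟨x, rfl⟩
  obtain ⟨hfd, hfr⟩ := rankLE_of_le hle
  refine ⟨hfd, hfr.trans ?_⟩
  exact (Submodule.finrank_add_le_finrank_add_finrank VA VB).trans (add_le_add hAm hBn)

lemma rankLE_smul {A : H →L[ℂ] H} {n : ℕ} (c : ℂ) (hA : RankLE A n) :
    RankLE (c • A) n := by
  obtain ⟨hAfd, hAn⟩ := hA
  haveI : FiniteDimensional ℂ (LinearMap.range (A : H →ₗ[ℂ] H)) := hAfd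
  have hle : LinearMap.range ((c • A : H →L[ℂ] H) : H →ₗ[ℂ] H) ≤
      LinearMap.range (A : H →ₗ[ℂ] H) := by
    rintro _ ⟨x, rfl⟩
    have : ((c • A : H →L[ℂ] H) : H →ₗ[ℂ] H) x = c • A x := by simp
    rw [this]
    exact Submodule.smul_mem _ c ⟨x, rfl⟩
  obtain ⟨hfd, hfr⟩ := rankLE_of_le hle
  exact ⟨hfd, hfr.trans hAn⟩

lemma rankLE_adjoint {A : H →L[ℂ] H} {n : ℕ} (hA : RankLE A n) :
    RankLE (adjoint A) n := by
  obtain ⟨hAfd, hAn⟩ := hA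
  haveI : FiniteDimensional ℂ (LinearMap.range (A : H →ₗ[ℂ] H)) := hAfd
  set V := LinearMap.range (A : H →ₗ[ℂ] H) with hV
  haveI : CompleteSpace V := FiniteDimensional.complete ℂ V
  have hle : LinearMap.range ((adjoint A : H →L[ℂ] H) : H →ₗ[ℂ] H) ≤
      V.map (adjoint A : H →ₗ[ℂ] H) := by
    rintro _ ⟨y, rfl⟩
    obtain ⟨v, hv, w, hw, rfl⟩ := V.exists_add_mem_mem_orthogonal y
    have hw0 : adjoint A w = 0 := by
      have : (inner ℂ (adjoint A w) (adjoint A w) : ℂ) = 0 := by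
        rw [adjoint_inner_left]
        have := (Submodule.mem_orthogonal V w).mp hw (A (adjoint A w)) ⟨_, rfl⟩
        rw [← inner_conj_symm, this, map_zero]
      exact inner_self_eq_zero.mp this
    have : ((adjoint A : H →L[ℂ] H) : H →ₗ[ℂ] H) (v + w) = adjoint A v := by
      simp [map_add, hw0]
    rw [this]
    exact ⟨v, hv, rfl⟩
  obtain ⟨hfd, hfr⟩ := rankLE_of_le hle
  refine ⟨hfd, hfr.trans ?_⟩
  exact (Submodule.finrank_map_le _ V).trans hAn

lemma rankLE_cacCLM (hC : IsConjugation C) {A : H →L[ℂ] H} {n : ℕ} (hA : RankLE A n) :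
    RankLE (cacCLM hC A) n := by
  classical
  obtain ⟨hAfd, hAn⟩ := hA
  haveI : FiniteDimensional ℂ (LinearMap.range (A : H →ₗ[ℂ] H)) := hAfd
  set V := LinearMap.range (A : H →ₗ[ℂ] H) with hV
  let b : Basis (Fin (finrank ℂ V)) ℂ V := Module.finBasis ℂ V
  let g : Fin (finrank ℂ V) → H := fun i => C ((b i : H))
  let Cadd : H →+ H := AddMonoidHom.mk' C hC.add
  have hCV : ∀ v : H, v ∈ V → C v ∈ Submodule.span ℂ (Set.range g) := by
    intro v hv
    have hrepr : (∑ i, b.repr ⟨v, hv⟩ i • b i : V) = ⟨v, hv⟩ := b.sum_repr ⟨v, hv⟩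
    have hvH : v = ∑ i, b.repr ⟨v, hv⟩ i • (b i : H) := by
      have := congrArg (Subtype.val) hrepr
      simp only [Submodule.coe_sum, Submodule.coe_smul] at this
      exact this.symm
    rw [hvH]
    have : C (∑ i, b.repr ⟨v, hv⟩ i • (b i : H)) =
        ∑ i, Cadd (b.repr ⟨v, hv⟩ i • (b i : H)) := by
      exact map_sum Cadd _ _
    rw [this]
    apply Submodule.sum_mem
    intro i _
    have : Cadd (b.repr ⟨v, hv⟩ i • (b i : H)) =
        (starRingEnd ℂ (b.repr ⟨v, hv⟩ i)) • g i := by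
      show C (b.repr ⟨v, hv⟩ i • (b i : H)) = _
      rw [hC.smulc]
    rw [this]
    exact Submodule.smul_mem _ _ (Submodule.subset_span ⟨i, rfl⟩)
  haveI : FiniteDimensional ℂ (Submodule.span ℂ (Set.range g)) :=
    FiniteDimensional.span_of_finite ℂ (Set.finite_range g)
  have hle : LinearMap.range ((cacCLM hC A : H →L[ℂ] H) : H →ₗ[ℂ] H) ≤
      Submodule.span ℂ (Set.range g) := by
    rintro _ ⟨x, rfl⟩
    have : ((cacCLM hC A : H →L[ℂ] H) : H →ₗ[ℂ] H) x = C (A (C x)) := rfl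
    rw [this]
    exact hCV _ ⟨C x, rfl⟩
  obtain ⟨hfd, hfr⟩ := rankLE_of_le hle
  refine ⟨hfd, hfr.trans ?_⟩
  refine le_trans (finrank_span_le_card (Set.range g)) (le_trans ?_ hAn)
  rw [Set.toFinset_range]
  exact (Finset.card_image_le).trans (by simp)

lemma rankLE_symmOp (hC : IsConjugation C) {G : H →L[ℂ] H} {n : ℕ} (hG : RankLE G n) :
    RankLE (symmOp hC G) (n + n) := by
  have h1 : RankLE (cacCLM hC (adjoint G)) n := rankLE_cacCLM hC (rankLE_adjoint hG)
  exact rankLE_smul _ (rankLE_add hG h1)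

end Rank

/-- The `n`-th approximation number (= singular value) of `T`:
the distance from `T` to the operators of rank at most `n`. -/
noncomputable def approxNum {H : Type*} [NormedAddCommGroup H] [InnerProductSpace ℂ H]
    (T : H →L[ℂ] H) (n : ℕ) : ℝ :=
  sInf {r : ℝ | ∃ F : H →L[ℂ] H, IsFiniteRank F ∧
    Module.finrank ℂ (LinearMap.range (F : H →ₗ[ℂ] H)) ≤ n ∧ r = ‖T - F‖}

section Approx

variable {H : Type*} [NormedAddCommGroup H] [InnerProductSpace ℂ H] [CompleteSpace H]

open ContinuousLinearMap

/-- The defining set of `approxNum`. -/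
def apSet (T : H →L[ℂ] H) (n : ℕ) : Set ℝ :=
  {r : ℝ | ∃ F : H →L[ℂ] H, IsFiniteRank F ∧
    Module.finrank ℂ (LinearMap.range (F : H →ₗ[ℂ] H)) ≤ n ∧ r = ‖T - F‖}

lemma approxNum_eq (T : H →L[ℂ] H) (n : ℕ) : approxNum T n = sInf (apSet T n) := rfl

lemma mem_apSet_of_rankLE {T F : H →L[ℂ] H} {n : ℕ} (h : RankLE F n) :
    ‖T - F‖ ∈ apSet T n := ⟨F, h.1, h.2, rfl⟩

lemma apSet_nonempty (T : H →L[ℂ] H) (n : ℕ) : (apSet T n).Nonempty :=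
  ⟨‖T - 0‖, mem_apSet_of_rankLE (rankLE_zero n)⟩

lemma apSet_bddBelow (T : H →L[ℂ] H) (n : ℕ) : BddBelow (apSet T n) :=
  ⟨0, fun r ⟨_, _, _, hr⟩ => hr ▸ norm_nonneg _⟩

lemma approxNum_nonneg (T : H →L[ℂ] H) (n : ℕ) : 0 ≤ approxNum T n :=
  Real.sInf_nonneg (fun _ ⟨_, _, _, hr⟩ => hr ▸ norm_nonneg _)

lemma approxNum_le_of_rankLE {T F : H →L[ℂ] H} {n : ℕ} (h : RankLE F n) :
    approxNum T n ≤ ‖T - F‖ :=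
  csInf_le (apSet_bddBelow T n) (mem_apSet_of_rankLE h)

lemma approxNum_le_norm (T : H →L[ℂ] H) (n : ℕ) : approxNum T n ≤ ‖T‖ := by
  have := approxNum_le_of_rankLE (T := T) (rankLE_zero n)
  rwa [sub_zero] at this

lemma approxNum_antitone (T : H →L[ℂ] H) {n m : ℕ} (h : n ≤ m) :
    approxNum T m ≤ approxNum T n := by
  apply csInf_le_csInf (apSet_bddBelow T m) (apSet_nonempty T n)
  rintro r ⟨F, h1, h2, rfl⟩
  exact ⟨F, h1, h2.trans h, rfl⟩

lemma exists_rankLE_norm_lt (T : H →L[ℂ] H) (n : ℕ) {δ : ℝ} (hδ : 0 < δ) :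
    ∃ F : H →L[ℂ] H, RankLE F n ∧ ‖T - F‖ < approxNum T n + δ := by
  have hlt : sInf (apSet T n) < approxNum T n + δ := by
    rw [← approxNum_eq]; linarith
  obtain ⟨r, ⟨F, h1, h2, rfl⟩, hr⟩ := exists_lt_of_csInf_lt (apSet_nonempty T n) hlt
  exact ⟨F, ⟨h1, h2⟩, hr⟩

lemma approxNum_sub_le {F : H →L[ℂ] H} {k : ℕ} (hF : RankLE F k) (T : H →L[ℂ] H) (n : ℕ) :
    approxNum (T - F) (n + k) ≤ approxNum T n := by
  apply csInf_le_csInf (apSet_bddBelow (T - F) (n + k)) (apSet_nonempty T n)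
  rintro r ⟨G, h1, h2, rfl⟩
  refine ⟨G - F, (rankLE_sub ⟨h1, h2⟩ hF).1, (rankLE_sub ⟨h1, h2⟩ hF).2, ?_⟩
  rw [sub_sub_sub_cancel_right]

end Approx

/-- Membership in the Schatten `p`-class, via summability of the `p`-th powers of the
singular values. -/
def MemSchatten {H : Type*} [NormedAddCommGroup H] [InnerProductSpace ℂ H]
    (p : ℝ) (T : H →L[ℂ] H) : Prop :=
  Summable (fun n : ℕ => approxNum T n ^ p)

/-- The Schatten `p`-norm `‖T‖_p = (∑ sₙ(T)^p)^{1/p}`. -/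
noncomputable def schattenNorm {H : Type*} [NormedAddCommGroup H] [InnerProductSpace ℂ H]
    (p : ℝ) (T : H →L[ℂ] H) : ℝ :=
  (∑' n : ℕ, approxNum T n ^ p) ^ (1 / p)

section Main

variable {H : Type*} [NormedAddCommGroup H] [InnerProductSpace ℂ H] [CompleteSpace H]

open ContinuousLinearMap Filter Topology

lemma schatten_branch {C : H → H} (hC : IsConjugation C) {p : ℝ} (hp : 1 ≤ p)
    {T : H →L[ℂ] H} (hT : T ∈ SC C) (hS : Summable (fun n : ℕ => approxNum T n ^ p))
    {ε : ℝ} (hε : 0 < ε) :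
    ∃ F ∈ SC C, IsFiniteRank F ∧ Summable (fun n : ℕ => approxNum (T - F) n ^ p) ∧
      (∑' n : ℕ, approxNum (T - F) n ^ p) < ε ^ p := by
  have hp0 : (0 : ℝ) < p := lt_of_lt_of_le one_pos hp
  set a : ℕ → ℝ := fun n => approxNum T n with ha
  set f : ℕ → ℝ := fun n => a n ^ p with hf
  set η : ℝ := ε ^ p with hη
  have hη0 : 0 < η := Real.rpow_pos_of_pos hε p
  -- tail of the series of T tends to 0
  have htail : Tendsto (fun i => ∑' n : ℕ, f (n + i)) atTop (𝓝 0) := tendsto_sum_nat_add f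
  obtain ⟨k, hk⟩ := (htail.eventually_lt_const (show (0:ℝ) < η / 8 by linarith)).exists
  have hSj : ∀ j : ℕ, Summable (fun n => f (n + j)) :=
    fun j => (summable_nat_add_iff j).2 hS
  set N : ℕ := 2 * k with hN
  -- k * a N ^ p is at most the tail at k
  have hkN : (k : ℝ) * a N ^ p ≤ ∑' n : ℕ, f (n + k) := by
    have h1 : ∀ j ∈ Finset.range k, a N ^ p ≤ f (j + k) := by
      intro j hj
      apply Real.rpow_le_rpow (approxNum_nonneg T N) _ hp0.le
      apply approxNum_antitone T
      have := Finset.mem_range.mp hj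
      omega
    calc (k : ℝ) * a N ^ p = ∑ _j ∈ Finset.range k, a N ^ p := by
          rw [Finset.sum_const, Finset.card_range, nsmul_eq_mul]
      _ ≤ ∑ j ∈ Finset.range k, f (j + k) := Finset.sum_le_sum h1
      _ ≤ ∑' n : ℕ, f (n + k) := by
          apply Summable.sum_le_tsum _ _ (hSj k)
          intro i _
          exact Real.rpow_nonneg (approxNum_nonneg T _) p
  -- continuity: choose δ
  set g : ℝ → ℝ := fun t => (5 * k : ℝ) * t ^ p with hg
  have hgc : ContinuousAt g (a N) :=
    continuousAt_const.mul (Real.continuousAt_rpow_const _ _ (Or.inr hp0.le))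
  have hev : ∀ᶠ t in 𝓝 (a N), g t < g (a N) + η / 8 :=
    hgc.eventually_lt_const (by linarith)
  obtain ⟨δ, hδ0, hδ⟩ := Metric.eventually_nhds_iff.mp hev
  -- choose G of rank at most N close to T
  obtain ⟨G, hG, hGn⟩ := exists_rankLE_norm_lt T N hδ0
  have haG : a N ≤ ‖T - G‖ := approxNum_le_of_rankLE hG
  have hgG : g ‖T - G‖ < g (a N) + η / 8 := by
    apply hδ
    rw [Real.dist_eq, abs_of_nonneg (by linarith)]
    linarith
  -- symmetrize
  set F : H →L[ℂ] H := symmOp hC G with hFdef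
  have hFrank : RankLE F (N + N) := rankLE_symmOp hC hG
  have hTF : ‖T - F‖ ≤ ‖T - G‖ := norm_sub_symmOp_le hC hT G
  set b : ℕ → ℝ := fun m => approxNum (T - F) m ^ p with hb
  have hb0 : ∀ m, 0 ≤ b m := fun m => Real.rpow_nonneg (approxNum_nonneg _ _) p
  -- tail bound for b
  have hbt : ∀ n : ℕ, b (n + 5 * k) ≤ f (n + k) := by
    intro n
    apply Real.rpow_le_rpow (approxNum_nonneg _ _) _ hp0.le
    have h1 : approxNum (T - F) ((n + k) + (N + N)) ≤ a (n + k) :=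
      approxNum_sub_le hFrank T (n + k)
    have h2 : (n + k) + (N + N) = n + 5 * k := by omega
    rwa [h2] at h1
  have hbshift : Summable (fun n => b (n + 5 * k)) :=
    Summable.of_nonneg_of_le (fun n => hb0 _) hbt (hSj k)
  have hbsum : Summable b := (summable_nat_add_iff (5 * k)).1 hbshift
  -- head bound
  have hhead : ∑ i ∈ Finset.range (5 * k), b i ≤ g ‖T - G‖ := by
    have h1 : ∀ i ∈ Finset.range (5 * k), b i ≤ ‖T - G‖ ^ p := by
      intro i _
      apply Real.rpow_le_rpow (approxNum_nonneg _ _) _ hp0.le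
      exact (approxNum_le_norm _ _).trans hTF
    calc ∑ i ∈ Finset.range (5 * k), b i ≤ ∑ _i ∈ Finset.range (5 * k), ‖T - G‖ ^ p :=
          Finset.sum_le_sum h1
      _ = (5 * k : ℝ) * ‖T - G‖ ^ p := by
          rw [Finset.sum_const, Finset.card_range, nsmul_eq_mul]
          push_cast; ring
      _ = g ‖T - G‖ := rfl
  -- tail bound
  have htail2 : (∑' n : ℕ, b (n + 5 * k)) ≤ ∑' n : ℕ, f (n + k) :=
    Summable.tsum_le_tsum hbt hbshift (hSj k)
  -- put together
  have hsplit : ∑ i ∈ Finset.range (5 * k), b i + ∑' n : ℕ, b (n + 5 * k) = ∑' n : ℕ, b n :=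
    hbsum.sum_add_tsum_nat_add (5 * k)
  have hgN : g (a N) ≤ 5 * ((k : ℝ) * a N ^ p) := by
    rw [hg]; push_cast; ring_nf; rfl
  have htotal : (∑' n : ℕ, b n) < η := by
    rw [← hsplit]
    have h5 : 5 * ((k : ℝ) * a N ^ p) ≤ 5 * (η / 8) := by
      have := hkN.trans hk.le
      linarith
    calc ∑ i ∈ Finset.range (5 * k), b i + ∑' n : ℕ, b (n + 5 * k)
        < (g (a N) + η / 8) + η / 8 := by
          have := hhead.trans_lt hgG
          have := htail2.trans_lt hk
          linarith
      _ ≤ (5 * (η / 8) + η / 8) + η / 8 := by linarith [hgN.trans h5]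
      _ < η := by linarith
  exact ⟨F, symmOp_mem_SC hC G, hFrank.1, hbsum, htotal⟩

lemma compact_approx {T : H →L[ℂ] H} (hcpt : IsCompactOperator (⇑T)) {δ : ℝ} (hδ : 0 < δ) :
    ∃ G : H →L[ℂ] H, IsFiniteRank G ∧ ‖T - G‖ ≤ δ := by
  classical
  have hT' : IsCompactOperator (⇑(T : H →ₗ[ℂ] H)) := by
    rwa [ContinuousLinearMap.coe_coe]
  have hK : IsCompact (closure ((T : H →ₗ[ℂ] H) '' Metric.closedBall 0 1)) :=
    hT'.isCompact_closure_image_closedBall 1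
  obtain ⟨t, htfin, htsub⟩ := (Metric.totallyBounded_iff.mp hK.totallyBounded) δ hδ
  set V : Submodule ℂ H := Submodule.span ℂ t with hV
  haveI : FiniteDimensional ℂ V := FiniteDimensional.span_of_finite ℂ htfin
  haveI : CompleteSpace V := FiniteDimensional.complete ℂ V
  set P : H →L[ℂ] H := V.subtypeL.comp (V.orthogonalProjectionOnto) with hP
  set G : H →L[ℂ] H := P.comp T with hG
  have hrange : LinearMap.range ((G : H →L[ℂ] H) : H →ₗ[ℂ] H) ≤ V := by
    rintro _ ⟨x, rfl⟩
    exact (V.orthogonalProjectionOnto (T x)).2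
  have hGfr : IsFiniteRank G := Submodule.finiteDimensional_of_le hrange
  -- bound on the unit ball
  have hball : ∀ x : H, ‖x‖ ≤ 1 → ‖(T - G) x‖ ≤ δ := by
    intro x hx
    have hmem : T x ∈ closure ((T : H →ₗ[ℂ] H) '' Metric.closedBall 0 1) := by
      apply subset_closure
      exact ⟨x, by rwa [Metric.mem_closedBall, dist_zero_right], rfl⟩
    obtain ⟨y, hyt, hyb⟩ := Set.mem_iUnion₂.mp (htsub hmem)
    have hyd : ‖T x - y‖ < δ := by
      rwa [Metric.mem_ball, dist_eq_norm] at hyb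
    have hyV : y ∈ V := Submodule.subset_span hyt
    have hmin : ‖T x - (V.orthogonalProjectionOnto (T x) : H)‖ ≤ ‖T x - y‖ := by
      rw [show ((V.orthogonalProjectionOnto (T x) : V) : H) = V.starProjection (T x) from rfl,
        Submodule.starProjection_minimal]
      have hbdd : BddBelow (Set.range fun v : V => ‖T x - (v : H)‖) := by
        refine ⟨0, ?_⟩
        rintro _ ⟨v, rfl⟩
        exact norm_nonneg _
      exact ciInf_le hbdd (⟨y, hyV⟩ : V)
    have h1 : (T - G) x = T x - (V.orthogonalProjectionOnto (T x) : H) := by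
      simp [hG, hP]
    rw [h1]
    exact hmin.trans hyd.le
  refine ⟨G, hGfr, ?_⟩
  apply ContinuousLinearMap.opNorm_le_bound _ hδ.le
  intro x
  by_cases hx : x = 0
  · simp [hx]
  · have hxn : (0 : ℝ) < ‖x‖ := norm_pos_iff.mpr hx
    have hxc : ((‖x‖ : ℂ)) ≠ 0 := by
      simp [ne_of_gt hxn]
    set u : H := ((‖x‖ : ℂ))⁻¹ • x with hu
    have hun : ‖u‖ ≤ 1 := by
      rw [hu, norm_smul]
      simp [norm_inv]
      rw [inv_mul_cancel₀ (ne_of_gt hxn)]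
    have hxu : x = ((‖x‖ : ℂ)) • u := by
      rw [hu, smul_inv_smul₀ hxc]
    calc ‖(T - G) x‖ = ‖(T - G) (((‖x‖ : ℂ)) • u)‖ := by rw [← hxu]
      _ = ‖((‖x‖ : ℂ))‖ * ‖(T - G) u‖ := by rw [map_smul, norm_smul]
      _ = ‖x‖ * ‖(T - G) u‖ := by simp [abs_of_nonneg hxn.le]
      _ ≤ ‖x‖ * δ := by
          apply mul_le_mul_of_nonneg_left (hball u hun) hxn.le
      _ = δ * ‖x‖ := mul_comm _ _

end Main

/-- Finite-rank operators in `S_C` are dense in `S_C ∩ B_p(H)` for the Schatten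
`p`-norm (`1 ≤ p < ∞`), and in `S_C ∩ K(H)` for the operator norm. -/
theorem stmt6 {H : Type*} [NormedAddCommGroup H] [InnerProductSpace ℂ H] [CompleteSpace H]
    [TopologicalSpace.SeparableSpace H] (hdim : ¬ FiniteDimensional ℂ H)
    (C : H → H) (hC : IsConjugation C) (p : ℝ) (hp : 1 ≤ p) :
    (∀ T ∈ SC C, MemSchatten p T → ∀ ε > (0 : ℝ),
      ∃ F ∈ SC C, IsFiniteRank F ∧ MemSchatten p (T - F) ∧ schattenNorm p (T - F) < ε) ∧
    (∀ T ∈ SC C, IsCompactOperator (⇑T) → ∀ ε > (0 : ℝ),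
      ∃ F ∈ SC C, IsFiniteRank F ∧ ‖T - F‖ < ε) := by
  have hp0 : (0 : ℝ) < p := lt_of_lt_of_le one_pos hp
  constructor
  · intro T hT hmem ε hε
    obtain ⟨F, hFSC, hFfr, hsum, hlt⟩ := schatten_branch hC hp hT hmem hε
    refine ⟨F, hFSC, hFfr, hsum, ?_⟩
    have h2 : 0 ≤ ∑' n : ℕ, approxNum (T - F) n ^ p :=
      tsum_nonneg fun n => Real.rpow_nonneg (approxNum_nonneg _ _) p
    have h3 : (∑' n : ℕ, approxNum (T - F) n ^ p) ^ (1/p) < (ε ^ p) ^ (1/p) :=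
      Real.rpow_lt_rpow h2 hlt (by positivity)
    have h4 : (ε ^ p) ^ (1/p) = ε := by
      rw [← Real.rpow_mul hε.le, mul_one_div_cancel hp0.ne', Real.rpow_one]
    show (∑' n : ℕ, approxNum (T - F) n ^ p) ^ (1/p) < ε
    rw [← h4]
    exact h3
  · intro T hT hcpt ε hε
    obtain ⟨G, hGfr, hGle⟩ := compact_approx hcpt (show (0:ℝ) < ε/2 by linarith)
    refine ⟨symmOp hC G, symmOp_mem_SC hC G,
      (rankLE_symmOp hC ⟨hGfr, le_refl _⟩).1, ?_⟩
    calc ‖T - symmOp hC G‖ ≤ ‖T - G‖ := norm_sub_symmOp_le hC hT G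
      _ ≤ ε/2 := hGle
      _ < ε := by linarith
end

section
/- Let C be a conjugation on H. A map φ : S_C → S_C is a Jordan automorphism of S_C if and only if there exists a unitary operator V ∈ B(H) with C V = V C such that φ(X) = V X V* for all X ∈ S_C. -/
section Aux
set_option linter.unusedSectionVars false

open ContinuousLinearMap

variable {H : Type*} [NormedAddCommGroup H] [InnerProductSpace ℂ H] [CompleteSpace H]

local notation "⟪" x ", " y "⟫" => (inner ℂ x y : ℂ)

variable {C : H → H}

lemma C_add (hC : IsConjugation C) : ∀ x y, C (x + y) = C x + C y := hC.1
lemma C_smul (hC : IsConjugation C) : ∀ (a : ℂ) (x : H), C (a • x) = (starRingEnd ℂ a) • C x := hC.2.1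
lemma C_C (hC : IsConjugation C) : ∀ x, C (C x) = x := hC.2.2.1
lemma C_inner (hC : IsConjugation C) : ∀ x y : H, ⟪C x, C y⟫ = ⟪y, x⟫ := hC.2.2.2

lemma C_zero (hC : IsConjugation C) : C 0 = 0 := by
  simpa using hC.2.1 0 0

lemma C_eq_zero_iff (hC : IsConjugation C) {x : H} : C x = 0 ↔ x = 0 := by
  constructor
  · intro h
    have := congrArg C h
    rwa [C_C hC, C_zero hC] at this
  · rintro rfl; exact C_zero hC

/-- The symmetric bilinear form `β u v = ⟪C u, v⟫`. -/
noncomputable def beta (C : H → H) (u v : H) : ℂ := ⟪C u, v⟫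

lemma beta_symm (hC : IsConjugation C) (u v : H) : beta C u v = beta C v u := by
  unfold beta
  conv_lhs => rw [← C_C hC v]
  rw [C_inner hC]

lemma beta_add_left (hC : IsConjugation C) (u u' v : H) :
    beta C (u + u') v = beta C u v + beta C u' v := by
  unfold beta; rw [C_add hC, inner_add_left]

lemma beta_add_right (u v v' : H) :
    beta C u (v + v') = beta C u v + beta C u v' := inner_add_right _ _ _

lemma beta_smul_left (hC : IsConjugation C) (a : ℂ) (u v : H) :
    beta C (a • u) v = a * beta C u v := by
  unfold beta; rw [C_smul hC, inner_smul_left]; simp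

lemma beta_smul_right (a : ℂ) (u v : H) :
    beta C u (a • v) = a * beta C u v := inner_smul_right _ _ _

lemma beta_zero_left (hC : IsConjugation C) (v : H) : beta C 0 v = 0 := by
  unfold beta; rw [C_zero hC, inner_zero_left]

lemma beta_zero_right (u : H) : beta C u 0 = 0 := inner_zero_right _

lemma beta_self_C (hC : IsConjugation C) (a : H) : beta C a (C a) = ⟪a, a⟫ := by
  unfold beta; rw [C_inner hC]

lemma beta_self_C_ne (hC : IsConjugation C) {a : H} (ha : a ≠ 0) : beta C a (C a) ≠ 0 := by
  rw [beta_self_C hC]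
  simpa [inner_self_eq_zero] using ha

/-- membership in `SC` from an inner-product identity -/
lemma mem_SC_of_inner {X : H →L[ℂ] H} (h : ∀ x y, ⟪C (X (C x)), y⟫ = ⟪x, X y⟫) :
    X ∈ SC C := by
  intro x
  refine ext_inner_right ℂ fun y => ?_
  rw [h, ContinuousLinearMap.adjoint_inner_left]

lemma SC_star_apply {X : H →L[ℂ] H} (hX : X ∈ SC C) (x : H) :
    C (X (C x)) = star X x := by
  rw [ContinuousLinearMap.star_eq_adjoint]; exact hX x

lemma mem_SC_of_star {X : H →L[ℂ] H} (h : ∀ x, C (X (C x)) = star X x) : X ∈ SC C := by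
  intro x; rw [← ContinuousLinearMap.star_eq_adjoint]; exact h x

lemma SC_apply_C (hC : IsConjugation C) {X : H →L[ℂ] H} (hX : X ∈ SC C) (x : H) :
    C (X x) = star X (C x) := by
  have := SC_star_apply hX (C x)
  rwa [C_C hC] at this

lemma SC_C_apply (hC : IsConjugation C) {X : H →L[ℂ] H} (hX : X ∈ SC C) (x : H) :
    X (C x) = C (star X x) := by
  have := congrArg C (SC_star_apply hX x)
  rwa [C_C hC] at this

lemma SC_beta (hC : IsConjugation C) {X : H →L[ℂ] H} (hX : X ∈ SC C) (u v : H) :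
    beta C (X u) v = beta C u (X v) := by
  unfold beta
  rw [SC_apply_C hC hX, ContinuousLinearMap.star_eq_adjoint,
    ContinuousLinearMap.adjoint_inner_left]


/-- rank one operator `z ↦ β(a,z) a`. -/
noncomputable def rk (C : H → H) (a : H) : H →L[ℂ] H :=
  (innerSL ℂ (C a)).smulRight a

/-- `A2 a b = |a⟩β⟨b| + |b⟩β⟨a|`. -/
noncomputable def A2 (C : H → H) (a b : H) : H →L[ℂ] H :=
  (innerSL ℂ (C b)).smulRight a + (innerSL ℂ (C a)).smulRight b

lemma rk_apply (a z : H) : rk C a z = beta C a z • a := rfl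

lemma A2_apply (a b z : H) : A2 C a b z = beta C b z • a + beta C a z • b := rfl

lemma rk_zero : rk C (0 : H) = 0 := by
  ext z; simp [rk_apply]

lemma rk_ne_zero (hC : IsConjugation C) {a : H} (ha : a ≠ 0) : rk C a ≠ 0 := by
  intro h
  have h1 : rk C a (C a) = 0 := by rw [h]; rfl
  rw [rk_apply] at h1
  exact smul_ne_zero (beta_self_C_ne hC ha) ha h1

lemma rk_smul (hC : IsConjugation C) (c : ℂ) (a : H) : rk C (c • a) = (c^2) • rk C a := by
  ext z
  simp only [rk_apply, ContinuousLinearMap.smul_apply, beta_smul_left hC, smul_smul]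
  congr 1
  ring

lemma rk_add (hC : IsConjugation C) (a b : H) :
    rk C (a + b) = rk C a + rk C b + A2 C a b := by
  ext z
  simp only [rk_apply, A2_apply, ContinuousLinearMap.add_apply, beta_add_left hC, add_smul,
    smul_add]
  abel

lemma A2_comm (a b : H) : A2 C a b = A2 C b a := by
  ext z; simp only [A2_apply]; abel

lemma A2_add_left (hC : IsConjugation C) (a a' b : H) :
    A2 C (a + a') b = A2 C a b + A2 C a' b := by
  ext z
  simp only [A2_apply, ContinuousLinearMap.add_apply, beta_add_left hC, add_smul, smul_add]
  abel

lemma A2_smul_left (hC : IsConjugation C) (c : ℂ) (a b : H) :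
    A2 C (c • a) b = c • A2 C a b := by
  ext z
  simp only [A2_apply, ContinuousLinearMap.smul_apply, beta_smul_left hC, smul_add, smul_smul]
  rw [mul_comm (beta C b z) c]

lemma A2_self (a : H) : A2 C a a = (2:ℂ) • rk C a := by
  ext z
  simp only [A2_apply, rk_apply, ContinuousLinearMap.smul_apply]
  rw [two_smul]

lemma rk_mem (hC : IsConjugation C) (a : H) : rk C a ∈ SC C := by
  refine mem_SC_of_inner fun x y => ?_
  simp only [rk_apply]
  unfold beta
  rw [C_inner hC, C_smul hC, inner_smul_left, inner_smul_right]
  simp only [RingHom.id_apply, starRingEnd_self_apply]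
  ring

lemma A2_mem (hC : IsConjugation C) (a b : H) : A2 C a b ∈ SC C := by
  refine mem_SC_of_inner fun x y => ?_
  simp only [A2_apply]
  unfold beta
  rw [C_add hC, inner_add_left, inner_add_right, C_inner hC, C_inner hC,
    C_smul hC, C_smul hC, inner_smul_left, inner_smul_left, inner_smul_right, inner_smul_right]
  simp only [starRingEnd_self_apply]
  ring

lemma SC_zero (hC : IsConjugation C) : (0 : H →L[ℂ] H) ∈ SC C := by
  refine mem_SC_of_star fun x => ?_
  simp [C_zero hC]

lemma SC_smul_add (hC : IsConjugation C) {X Y : H →L[ℂ] H} (hX : X ∈ SC C) (hY : Y ∈ SC C)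
    (a b : ℂ) : a • X + b • Y ∈ SC C := by
  refine mem_SC_of_star fun x => ?_
  simp only [ContinuousLinearMap.add_apply, ContinuousLinearMap.smul_apply]
  rw [C_add hC, C_smul hC, C_smul hC, SC_star_apply hX, SC_star_apply hY]
  simp [star_add, star_smul]

lemma SC_add (hC : IsConjugation C) {X Y : H →L[ℂ] H} (hX : X ∈ SC C) (hY : Y ∈ SC C) :
    X + Y ∈ SC C := by
  have := SC_smul_add hC hX hY 1 1; simpa using this

lemma SC_smul (hC : IsConjugation C) {X : H →L[ℂ] H} (hX : X ∈ SC C) (a : ℂ) :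
    a • X ∈ SC C := by
  have := SC_smul_add hC hX hX a 0; simpa using this

lemma SC_sub (hC : IsConjugation C) {X Y : H →L[ℂ] H} (hX : X ∈ SC C) (hY : Y ∈ SC C) :
    X - Y ∈ SC C := by
  have := SC_smul_add hC hX hY 1 (-1); simpa [sub_eq_add_neg] using this

lemma SC_star (hC : IsConjugation C) {X : H →L[ℂ] H} (hX : X ∈ SC C) : star X ∈ SC C := by
  refine mem_SC_of_star fun x => ?_
  rw [← SC_apply_C hC hX x, C_C hC, star_star]

lemma SC_mul3 (hC : IsConjugation C) {X Z : H →L[ℂ] H} (hX : X ∈ SC C) (hZ : Z ∈ SC C) :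
    X * Z * X ∈ SC C := by
  refine mem_SC_of_star fun x => ?_
  simp only [ContinuousLinearMap.mul_apply]
  rw [SC_C_apply hC hX, SC_C_apply hC hZ, SC_C_apply hC hX, C_C hC]
  simp only [star_mul, star_star, ContinuousLinearMap.mul_apply]

lemma SC_jmul (hC : IsConjugation C) {X Y : H →L[ℂ] H} (hX : X ∈ SC C) (hY : Y ∈ SC C) :
    jmul X Y ∈ SC C := by
  refine mem_SC_of_star fun x => ?_
  simp only [jmul, ContinuousLinearMap.smul_apply, ContinuousLinearMap.add_apply,
    ContinuousLinearMap.mul_apply]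
  rw [C_smul hC, C_add hC, SC_C_apply hC hY x, SC_C_apply hC hX x,
    SC_apply_C hC hX, SC_apply_C hC hY, C_C hC, C_C hC]
  simp only [star_smul, star_add, star_mul, ContinuousLinearMap.smul_apply,
    ContinuousLinearMap.add_apply, ContinuousLinearMap.mul_apply]
  show (starRingEnd ℂ) (2:ℂ)⁻¹ • ((star X) ((star Y) x) + (star Y) ((star X) x)) =
      (starRingEnd ℂ) (2:ℂ)⁻¹ • ((star Y) ((star X) x) + (star X) ((star Y) x))
  rw [add_comm ((star X) ((star Y) x))]

lemma rk_mul_self (hC : IsConjugation C) (a : H) :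
    rk C a * rk C a = beta C a a • rk C a := by
  ext z
  simp only [ContinuousLinearMap.mul_apply, ContinuousLinearMap.smul_apply, rk_apply,
    beta_smul_right, map_smul, smul_smul]
  congr 1
  ring

lemma jmul_self (X : H →L[ℂ] H) : jmul X X = X * X := by
  unfold jmul
  rw [← two_smul ℂ (X * X), smul_smul]
  norm_num

lemma rk_sandwich (hC : IsConjugation C) (a : H) (X : H →L[ℂ] H) :
    rk C a * X * rk C a = beta C a (X a) • rk C a := by
  ext z
  simp only [ContinuousLinearMap.mul_apply, ContinuousLinearMap.smul_apply, rk_apply,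
    map_smul, beta_smul_right, smul_smul]
  congr 1
  ring

lemma rk_sandwich_rk (hC : IsConjugation C) (a u : H) :
    rk C a * rk C u * rk C a = (beta C a u)^2 • rk C a := by
  rw [rk_sandwich hC]
  congr 1
  rw [rk_apply, beta_smul_right, beta_symm hC u a]
  ring

lemma A2_rk_A2 (hC : IsConjugation C) {u x₀ : H} (hb : beta C u x₀ = 0)
    (h1 : beta C x₀ x₀ = 1) : A2 C u x₀ * rk C x₀ * A2 C u x₀ = rk C u := by
  have hb' : beta C x₀ u = 0 := by rw [beta_symm hC]; exact hb
  ext z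
  simp only [ContinuousLinearMap.mul_apply, A2_apply, rk_apply, map_add, map_smul,
    beta_add_right, beta_smul_right, hb, hb', h1, smul_add, smul_smul]
  simp only [mul_zero, zero_mul, mul_one, one_mul, zero_add, add_zero, zero_smul, smul_zero]

lemma A2_addmul_rk (hC : IsConjugation C) {u x₀ : H} (hb : beta C u x₀ = 0)
    (h1 : beta C x₀ x₀ = 1) :
    A2 C u x₀ * rk C x₀ + rk C x₀ * A2 C u x₀ = A2 C u x₀ := by
  have hb' : beta C x₀ u = 0 := by rw [beta_symm hC]; exact hb
  ext z
  simp only [ContinuousLinearMap.mul_apply, ContinuousLinearMap.add_apply, A2_apply, rk_apply,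
    map_add, map_smul, beta_add_right, beta_smul_right, hb, hb', h1, smul_add, smul_smul]
  simp only [mul_zero, zero_mul, mul_one, one_mul, zero_add, add_zero, zero_smul, smul_zero]

lemma A2_jmul_rk (hC : IsConjugation C) {u x₀ : H} (hb : beta C u x₀ = 0)
    (h1 : beta C x₀ x₀ = 1) :
    jmul (A2 C u x₀) (rk C x₀) = (2:ℂ)⁻¹ • A2 C u x₀ := by
  unfold jmul
  rw [A2_addmul_rk hC hb h1]

lemma star_rk (hC : IsConjugation C) (a : H) : star (rk C a) = rk C (C a) := by
  refine ContinuousLinearMap.ext fun z => ext_inner_right ℂ fun y => ?_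
  rw [ContinuousLinearMap.star_eq_adjoint, ContinuousLinearMap.adjoint_inner_left]
  simp only [rk_apply]
  unfold beta
  rw [C_C hC, inner_smul_left, inner_smul_right]
  rw [← inner_conj_symm z a]
  ring

lemma eq_of_smul_rk (hC : IsConjugation C) {a : H} (ha : a ≠ 0) {c d : ℂ}
    (h : c • rk C a = d • rk C a) : c = d := by
  have h2 : (c - d) • rk C a = 0 := by rw [sub_smul, h, sub_self]
  rcases smul_eq_zero.1 h2 with h3 | h3
  · exact sub_eq_zero.1 h3
  · exact absurd h3 (rk_ne_zero hC ha)

lemma rk_eq_rk (hC : IsConjugation C) {a b : H} (ha : a ≠ 0) (h : rk C a = rk C b) :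
    b = a ∨ b = -a := by
  have e : beta C a (C a) • a = beta C b (C a) • b := by
    have := congrArg (fun (T : H →L[ℂ] H) => T (C a)) h
    simpa only [rk_apply] using this
  have hs : beta C a (C a) ≠ 0 := beta_self_C_ne hC ha
  have ht : beta C b (C a) ≠ 0 := by
    intro h0
    rw [h0, zero_smul] at e
    exact smul_ne_zero hs ha e
  set μ : ℂ := (beta C b (C a))⁻¹ * beta C a (C a) with hμ
  have hbμ : b = μ • a := by
    rw [hμ, mul_smul, e, smul_smul, inv_mul_cancel₀ ht, one_smul]
  have hμ0 : μ ≠ 0 := mul_ne_zero (inv_ne_zero ht) hs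
  have h2 : rk C b = μ^2 • rk C a := by rw [hbμ, rk_smul hC]
  have h3 : μ^2 = 1 := by
    exact eq_of_smul_rk hC ha (by rw [one_smul, ← h2, ← h] : μ^2 • rk C a = (1:ℂ) • rk C a)
  have h4 : (μ - 1) * (μ + 1) = 0 := by ring_nf; rw [← h3]; ring
  rcases mul_eq_zero.1 h4 with h5 | h5
  · left; rw [hbμ, sub_eq_zero.1 h5, one_smul]
  · right; rw [hbμ, eq_neg_of_add_eq_zero_left h5, neg_one_smul]

lemma central_claim (hC : IsConjugation C) {G : H →L[ℂ] H} (hG : G ∈ SC C) (y : H)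
    (hGP : G * rk C y + rk C y * G = G) : G = A2 C (G y) y := by
  ext z
  have h1 : G z = G (rk C y z) + rk C y (G z) := by
    conv_lhs => rw [← hGP]
    rfl
  rw [h1, A2_apply, rk_apply, map_smul, rk_apply]
  rw [show beta C y (G z) = beta C (G y) z by
    rw [← SC_beta hC hG y z]]

lemma sandwich_rk (hC : IsConjugation C) {G : H →L[ℂ] H} (hG : G ∈ SC C) (y : H) :
    G * rk C y * G = rk C (G y) := by
  ext z
  simp only [ContinuousLinearMap.mul_apply, rk_apply, map_smul]
  rw [show beta C y (G z) = beta C (G y) z by rw [← SC_beta hC hG y z]]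

lemma triple_identity (X Z : H →L[ℂ] H) :
    (2:ℂ) • jmul X (jmul X Z) - jmul (jmul X X) Z = X * Z * X := by
  unfold jmul
  simp only [smul_add, mul_smul_comm, smul_mul_assoc, smul_smul, mul_add, add_mul, mul_assoc]
  norm_num
  abel_nf
  module


lemma exists_real_unit (hC : IsConjugation C) (hne : ∃ x : H, x ≠ 0) :
    ∃ x₀ : H, C x₀ = x₀ ∧ beta C x₀ x₀ = 1 := by
  obtain ⟨z, hz⟩ := hne
  obtain ⟨w, hw, hwC⟩ : ∃ w : H, w ≠ 0 ∧ C w = w := by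
    by_cases h : z + C z = 0
    · have hcz : C z = -z := by rw [add_comm] at h; exact eq_neg_of_add_eq_zero_left h
      refine ⟨Complex.I • z, smul_ne_zero Complex.I_ne_zero hz, ?_⟩
      rw [C_smul hC, hcz]
      simp [Complex.conj_I]
    · exact ⟨z + C z, h, by rw [C_add hC, C_C hC, add_comm]⟩
  have hnw : ‖w‖ ≠ 0 := norm_ne_zero_iff.2 hw
  have hnwC : ((‖w‖ : ℝ) : ℂ) ≠ 0 := by exact_mod_cast hnw
  refine ⟨((‖w‖⁻¹ : ℝ) : ℂ) • w, ?_, ?_⟩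
  · rw [C_smul hC, hwC, Complex.conj_ofReal]
  · unfold beta
    rw [C_smul hC, hwC, Complex.conj_ofReal, inner_smul_left, inner_smul_right,
      Complex.conj_ofReal, inner_self_eq_norm_sq_to_K]
    push_cast
    field_simp
    ring_nf
    rfl

lemma rank_one_char (hC : IsConjugation C) {T : H →L[ℂ] H} (hT : T ∈ SC C) (hT0 : T ≠ 0)
    (h : ∀ Z ∈ SC C, ∃ c : ℂ, T * Z * T = c • T) :
    ∃ a : H, a ≠ 0 ∧ T = rk C a := by
  obtain ⟨w, hw⟩ : ∃ w, T w ≠ 0 := by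
    by_contra hco
    push_neg at hco
    exact hT0 (ContinuousLinearMap.ext fun z => by simpa using hco z)
  obtain ⟨c, hc⟩ := h (rk C w) (rk_mem hC w)
  rw [sandwich_rk hC hT w] at hc
  have hc0 : c ≠ 0 := by
    intro hc0
    rw [hc0, zero_smul] at hc
    exact rk_ne_zero hC hw hc
  obtain ⟨μ, hμ⟩ : ∃ μ : ℂ, μ^2 = c⁻¹ :=
    IsAlgClosed.exists_pow_nat_eq c⁻¹ zero_lt_two
  have hμ0 : μ ≠ 0 := by
    intro h0
    rw [h0] at hμ
    simp only [ne_eq, zero_pow, OfNat.ofNat_ne_zero, not_false_eq_true] at hμ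
    exact hc0 (by simpa using (inv_eq_zero.1 hμ.symm))
  refine ⟨μ • T w, smul_ne_zero hμ0 hw, ?_⟩
  rw [rk_smul hC, hμ, hc, smul_smul, inv_mul_cancel₀ hc0, one_smul]

lemma additive_mul_eq_zero {f g : H → ℂ} (hf : ∀ z w, f (z + w) = f z + f w)
    (hg : ∀ z w, g (z + w) = g z + g w) (h : ∀ z, f z * g z = 0) :
    (∀ z, f z = 0) ∨ (∀ z, g z = 0) := by
  by_contra hcon
  push_neg at hcon
  obtain ⟨z1, hz1⟩ := hcon.1
  obtain ⟨z2, hz2⟩ := hcon.2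
  have hg1 : g z1 = 0 := by
    rcases mul_eq_zero.1 (h z1) with h' | h'
    · exact absurd h' hz1
    · exact h'
  have hf2 : f z2 = 0 := by
    rcases mul_eq_zero.1 (h z2) with h' | h'
    · exact h'
    · exact absurd h' hz2
  have h12 := h (z1 + z2)
  rw [hf, hg, hg1, hf2, add_zero, zero_add] at h12
  rcases mul_eq_zero.1 h12 with h' | h'
  · exact hz1 h'
  · exact hz2 h'

end Aux

/-- A Jordan automorphism of `S_C` (encoded by a map of `B(H)` whose behaviour on
`S_C` is what matters): a bijection of `S_C` onto itself which is linear on `S_C`,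
preserves adjoints and the Jordan product. -/
def IsJordanAutoOf {H : Type*} [NormedAddCommGroup H] [InnerProductSpace ℂ H]
    [CompleteSpace H] (C : H → H) (φ : (H →L[ℂ] H) → (H →L[ℂ] H)) : Prop :=
  Set.BijOn φ (SC C) (SC C) ∧
  (∀ X ∈ SC C, ∀ Y ∈ SC C, ∀ a b : ℂ, φ (a • X + b • Y) = a • φ X + b • φ Y) ∧
  (∀ X ∈ SC C, φ (star X) = star (φ X)) ∧
  (∀ X ∈ SC C, ∀ Y ∈ SC C, φ (jmul X Y) = jmul (φ X) (φ Y))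

section Aux2
set_option linter.unusedSectionVars false
set_option maxHeartbeats 1000000

open ContinuousLinearMap

variable {H : Type*} [NormedAddCommGroup H] [InnerProductSpace ℂ H] [CompleteSpace H]
variable {C : H → H} {φ : (H →L[ℂ] H) → (H →L[ℂ] H)}

lemma phi_mem (hφ : IsJordanAutoOf C φ) {X : H →L[ℂ] H} (hX : X ∈ SC C) : φ X ∈ SC C :=
  hφ.1.1 hX

lemma phi_add (hC : IsConjugation C) (hφ : IsJordanAutoOf C φ) {X Y : H →L[ℂ] H}
    (hX : X ∈ SC C) (hY : Y ∈ SC C) : φ (X + Y) = φ X + φ Y := by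
  have := hφ.2.1 X hX Y hY 1 1; simpa using this

lemma phi_smul (hC : IsConjugation C) (hφ : IsJordanAutoOf C φ) {X : H →L[ℂ] H}
    (hX : X ∈ SC C) (a : ℂ) : φ (a • X) = a • φ X := by
  have := hφ.2.1 X hX 0 (SC_zero hC) a 0; simpa using this

lemma phi_zero (hC : IsConjugation C) (hφ : IsJordanAutoOf C φ) : φ 0 = 0 := by
  have := hφ.2.1 0 (SC_zero hC) 0 (SC_zero hC) 0 0; simpa using this

lemma phi_triple (hC : IsConjugation C) (hφ : IsJordanAutoOf C φ) {X Z : H →L[ℂ] H}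
    (hX : X ∈ SC C) (hZ : Z ∈ SC C) : φ (X * Z * X) = φ X * φ Z * φ X := by
  have m1 : jmul X Z ∈ SC C := SC_jmul hC hX hZ
  have m2 : jmul X (jmul X Z) ∈ SC C := SC_jmul hC hX m1
  have m3 : jmul X X ∈ SC C := SC_jmul hC hX hX
  have m4 : jmul (jmul X X) Z ∈ SC C := SC_jmul hC m3 hZ
  have e1 : X * Z * X = (2:ℂ) • jmul X (jmul X Z) + (-1:ℂ) • jmul (jmul X X) Z := by
    rw [neg_one_smul, ← sub_eq_add_neg, triple_identity]
  rw [e1, hφ.2.1 _ m2 _ m4 2 (-1)]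
  rw [hφ.2.2.2 _ hX _ m1, hφ.2.2.2 _ hX _ hZ, hφ.2.2.2 _ m3 _ hZ, hφ.2.2.2 _ hX _ hX]
  rw [neg_one_smul, ← sub_eq_add_neg, triple_identity]

lemma starV_comm (hC : IsConjugation C) {V : H →L[ℂ] H} (hV : V ∈ unitary (H →L[ℂ] H))
    (hVC : ∀ x, C (V x) = V (C x)) (x : H) : C (star V x) = star V (C x) := by
  have h1 : ∀ y, V (star V y) = y := fun y => by
    have h := (Unitary.mem_iff.1 hV).2
    calc V (star V y) = (V * star V) y := rfl
      _ = y := by rw [h]; rfl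
  have h2 : ∀ y, star V (V y) = y := fun y => by
    have h := (Unitary.mem_iff.1 hV).1
    calc star V (V y) = (star V * V) y := rfl
      _ = y := by rw [h]; rfl
  calc C (star V x) = star V (V (C (star V x))) := (h2 _).symm
    _ = star V (C (V (star V x))) := by rw [hVC]
    _ = star V (C x) := by rw [h1]

lemma conj_mem (hC : IsConjugation C) {V X : H →L[ℂ] H} (hVC : ∀ x, C (V x) = V (C x))
    (hVsC : ∀ x, C (star V x) = star V (C x)) (hX : X ∈ SC C) :
    V * X * star V ∈ SC C := by
  refine mem_SC_of_star fun x => ?_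
  simp only [ContinuousLinearMap.mul_apply]
  rw [← hVsC x, SC_C_apply hC hX, ← hVC _, C_C hC]
  simp only [star_mul, star_star, ContinuousLinearMap.mul_apply]

lemma bwd (hC : IsConjugation C) {V : H →L[ℂ] H} (hV : V ∈ unitary (H →L[ℂ] H))
    (hVC : ∀ x, C (V x) = V (C x)) (hφV : ∀ X ∈ SC C, φ X = V * X * star V) :
    IsJordanAutoOf C φ := by
  have hVsC : ∀ x, C (star V x) = star V (C x) := starV_comm hC hV hVC
  have hVu1 : star V * V = 1 := (Unitary.mem_iff.1 hV).1
  have hVu2 : V * star V = 1 := (Unitary.mem_iff.1 hV).2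
  have hmap : ∀ X ∈ SC C, V * X * star V ∈ SC C := fun X hX => conj_mem hC hVC hVsC hX
  have key : ∀ A B : H →L[ℂ] H, (V * A * star V) * (V * B * star V) = V * (A * B) * star V := by
    intro A B
    calc (V * A * star V) * (V * B * star V) = V * (A * ((star V * V) * (B * star V))) := by
          simp only [mul_assoc]
      _ = V * (A * B) * star V := by rw [hVu1, one_mul]; simp only [mul_assoc]
  have hcan : ∀ X : H →L[ℂ] H, star V * (V * X * star V) * V = X := by
    intro X
    calc star V * (V * X * star V) * V = (star V * V) * (X * (star V * V)) := by
          simp only [mul_assoc]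
      _ = X := by rw [hVu1, one_mul, mul_one]
  refine ⟨⟨fun X hX => ?_, fun X hX Y hY h => ?_, fun Y hY => ?_⟩, ?_, ?_, ?_⟩
  · rw [hφV X hX]; exact hmap X hX
  · rw [hφV X hX, hφV Y hY] at h
    have := congrArg (fun T => star V * T * V) h
    simpa only [hcan] using this
  · refine ⟨star V * Y * V, ?_, ?_⟩
    · have h1 : star V * Y * star (star V) ∈ SC C :=
        conj_mem hC (V := star V) hVsC (fun x => by rw [star_star]; exact hVC x) hY
      rwa [star_star] at h1
    · have hm : star V * Y * V ∈ SC C := by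
        have h1 : star V * Y * star (star V) ∈ SC C :=
          conj_mem hC (V := star V) hVsC (fun x => by rw [star_star]; exact hVC x) hY
        rwa [star_star] at h1
      rw [hφV _ hm]
      calc V * (star V * Y * V) * star V = (V * star V) * (Y * (V * star V)) := by
            simp only [mul_assoc]
        _ = Y := by rw [hVu2, one_mul, mul_one]
  · intro X hX Y hY a b
    rw [hφV _ (SC_smul_add hC hX hY a b), hφV X hX, hφV Y hY]
    simp only [mul_add, add_mul, mul_smul_comm, smul_mul_assoc]
  · intro X hX
    rw [hφV _ (SC_star hC hX), hφV X hX]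
    simp only [star_mul, star_star, mul_assoc]
  · intro X hX Y hY
    rw [hφV _ (SC_jmul hC hX hY), hφV X hX, hφV Y hY]
    unfold jmul
    rw [key X Y, key Y X]
    simp only [mul_smul_comm, smul_mul_assoc, mul_add, add_mul, smul_add, mul_assoc]


lemma C_neg (hC : IsConjugation C) (x : H) : C (-x) = - C x := by
  rw [← neg_one_smul ℂ x, C_smul hC]
  simp

lemma C_sub (hC : IsConjugation C) (x y : H) : C (x - y) = C x - C y := by
  rw [sub_eq_add_neg, C_add hC, C_neg hC, sub_eq_add_neg]

lemma beta_sub_left (hC : IsConjugation C) (u v w : H) :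
    beta C (u - v) w = beta C u w - beta C v w := by
  unfold beta; rw [C_sub hC, inner_sub_left]

lemma beta_sub_right (u v w : H) :
    beta C u (v - w) = beta C u v - beta C u w := inner_sub_right _ _ _

lemma A2_smul_right (hC : IsConjugation C) (c : ℂ) (a b : H) :
    A2 C a (c • b) = c • A2 C a b := by
  rw [A2_comm, A2_smul_left hC, A2_comm]

lemma smul_half_cancel {S T : H →L[ℂ] H} (h : (2:ℂ)⁻¹ • S = (2:ℂ)⁻¹ • T) : S = T := by
  have h2 := congrArg (fun R : H →L[ℂ] H => (2:ℂ) • R) h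
  simpa [smul_smul] using h2

/-- The candidate unitary, as a bare function. -/
noncomputable def Vmap (C : H → H) (φ : (H →L[ℂ] H) → (H →L[ℂ] H)) (x₀ y₀ u : H) : H :=
  φ (A2 C u x₀) y₀ - beta C u x₀ • y₀

lemma Vmap_add (hC : IsConjugation C) (hφ : IsJordanAutoOf C φ) (x₀ y₀ : H) (u v : H) :
    Vmap C φ x₀ y₀ (u + v) = Vmap C φ x₀ y₀ u + Vmap C φ x₀ y₀ v := by
  unfold Vmap
  rw [A2_add_left hC, phi_add hC hφ (A2_mem hC u x₀) (A2_mem hC v x₀), beta_add_left hC]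
  simp only [ContinuousLinearMap.add_apply, add_smul]
  abel

lemma Vmap_smul (hC : IsConjugation C) (hφ : IsJordanAutoOf C φ) (x₀ y₀ : H) (a : ℂ) (u : H) :
    Vmap C φ x₀ y₀ (a • u) = a • Vmap C φ x₀ y₀ u := by
  unfold Vmap
  rw [A2_smul_left hC, phi_smul hC hφ (A2_mem hC u x₀), beta_smul_left hC]
  simp only [ContinuousLinearMap.smul_apply, mul_smul]
  rw [smul_sub]

lemma Vmap_zero (hC : IsConjugation C) (hφ : IsJordanAutoOf C φ) (x₀ y₀ : H) :
    Vmap C φ x₀ y₀ 0 = 0 := by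
  have := Vmap_smul hC hφ x₀ y₀ 0 0
  simpa using this

lemma Vmap_neg (hC : IsConjugation C) (hφ : IsJordanAutoOf C φ) (x₀ y₀ : H) (u : H) :
    Vmap C φ x₀ y₀ (-u) = - Vmap C φ x₀ y₀ u := by
  have := Vmap_smul hC hφ x₀ y₀ (-1) u
  simpa using this

lemma Vmap_x₀ (hC : IsConjugation C) (hφ : IsJordanAutoOf C φ) {x₀ y₀ : H}
    (hx₀1 : beta C x₀ x₀ = 1) (hy₀1 : beta C y₀ y₀ = 1)
    (hPy₀ : φ (rk C x₀) = rk C y₀) :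
    Vmap C φ x₀ y₀ x₀ = y₀ := by
  unfold Vmap
  have hA2x₀ : φ (A2 C x₀ x₀) = (2:ℂ) • rk C y₀ := by
    rw [A2_self, phi_smul hC hφ (rk_mem hC x₀), hPy₀]
  rw [hA2x₀, hx₀1, one_smul]
  simp only [ContinuousLinearMap.smul_apply]
  rw [rk_apply, hy₀1, one_smul]
  module

lemma key_transport' (hC : IsConjugation C) (hφ : IsJordanAutoOf C φ) {x₀ y₀ : H}
    (hx₀1 : beta C x₀ x₀ = 1) (hy₀1 : beta C y₀ y₀ = 1)
    (hPy₀ : φ (rk C x₀) = rk C y₀) (b : ℂ) (u' : H) (hbu' : beta C u' x₀ = 0) :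
    φ (rk C (u' + b • x₀)) =
      rk C (φ (A2 C (u' + b • x₀) x₀) y₀ - beta C (u' + b • x₀) x₀ • y₀) := by
  have hA2mem : A2 C u' x₀ ∈ SC C := A2_mem hC u' x₀
  have hGmem : φ (A2 C u' x₀) ∈ SC C := phi_mem hφ hA2mem
  have hT₀mem : rk C x₀ ∈ SC C := rk_mem hC x₀
  have hbval : beta C (u' + b • x₀) x₀ = b := by
    rw [beta_add_left hC, beta_smul_left hC, hbu', hx₀1, mul_one, zero_add]
  -- G*P + P*G = G
  have hGP : φ (A2 C u' x₀) * rk C y₀ + rk C y₀ * φ (A2 C u' x₀) = φ (A2 C u' x₀) := by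
    have h2 := hφ.2.2.2 _ hA2mem _ hT₀mem
    rw [A2_jmul_rk hC hbu' hx₀1, phi_smul hC hφ hA2mem, hPy₀] at h2
    refine smul_half_cancel ?_
    calc (2:ℂ)⁻¹ • (φ (A2 C u' x₀) * rk C y₀ + rk C y₀ * φ (A2 C u' x₀))
        = jmul (φ (A2 C u' x₀)) (rk C y₀) := rfl
      _ = (2:ℂ)⁻¹ • φ (A2 C u' x₀) := h2.symm
  have hcc : φ (A2 C u' x₀) = A2 C (φ (A2 C u' x₀) y₀) y₀ := central_claim hC hGmem y₀ hGP
  have hq' : φ (rk C u') = rk C (φ (A2 C u' x₀) y₀) := by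
    have h1 := phi_triple hC hφ hA2mem hT₀mem
    rw [A2_rk_A2 hC hbu' hx₀1, hPy₀, sandwich_rk hC hGmem y₀] at h1
    exact h1
  have hrk : rk C (u' + b • x₀) = rk C u' + (b^2) • rk C x₀ + b • A2 C u' x₀ := by
    rw [rk_add hC, rk_smul hC, A2_smul_right hC]
  have happ : φ (rk C (u' + b • x₀)) =
      rk C (φ (A2 C u' x₀) y₀) + (b^2) • rk C y₀ + b • φ (A2 C u' x₀) := by
    rw [hrk]
    rw [phi_add hC hφ (SC_add hC (rk_mem hC u') (SC_smul hC hT₀mem (b^2))) (SC_smul hC hA2mem b)]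
    rw [phi_add hC hφ (rk_mem hC u') (SC_smul hC hT₀mem (b^2))]
    rw [phi_smul hC hφ hT₀mem, phi_smul hC hφ hA2mem, hPy₀, hq']
  have hvec : φ (A2 C (u' + b • x₀) x₀) y₀ - beta C (u' + b • x₀) x₀ • y₀ =
      φ (A2 C u' x₀) y₀ + b • y₀ := by
    rw [hbval]
    rw [A2_add_left hC, A2_smul_left hC]
    rw [phi_add hC hφ hA2mem (SC_smul hC (A2_mem hC x₀ x₀) b),
      phi_smul hC hφ (A2_mem hC x₀ x₀)]
    have hA2x₀ : φ (A2 C x₀ x₀) = (2:ℂ) • rk C y₀ := by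
      rw [A2_self, phi_smul hC hφ (rk_mem hC x₀), hPy₀]
    rw [hA2x₀]
    simp only [ContinuousLinearMap.add_apply, ContinuousLinearMap.smul_apply]
    rw [rk_apply, hy₀1, one_smul]
    module
  rw [happ, hvec]
  rw [rk_add hC, rk_smul hC, A2_smul_right hC, ← hcc]

lemma key_transport (hC : IsConjugation C) (hφ : IsJordanAutoOf C φ) {x₀ y₀ : H}
    (hx₀1 : beta C x₀ x₀ = 1) (hy₀1 : beta C y₀ y₀ = 1)
    (hPy₀ : φ (rk C x₀) = rk C y₀) (u : H) :
    φ (rk C u) = rk C (Vmap C φ x₀ y₀ u) := by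
  have hbu' : beta C (u - beta C u x₀ • x₀) x₀ = 0 := by
    rw [beta_sub_left hC, beta_smul_left hC, hx₀1, mul_one, sub_self]
  have hsum : u = (u - beta C u x₀ • x₀) + beta C u x₀ • x₀ := by abel
  have h := key_transport' hC hφ hx₀1 hy₀1 hPy₀ (beta C u x₀) (u - beta C u x₀ • x₀) hbu'
  rw [← hsum] at h
  exact h

lemma fwd (hC : IsConjugation C) (hne : ∃ x : H, x ≠ 0) (hφ : IsJordanAutoOf C φ) :
    ∃ V : H →L[ℂ] H, V ∈ unitary (H →L[ℂ] H) ∧ (∀ x : H, C (V x) = V (C x)) ∧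
      ∀ X ∈ SC C, φ X = V * X * star V := by
  obtain ⟨x₀, hx₀C, hx₀1⟩ := exists_real_unit hC hne
  have hx₀ : x₀ ≠ 0 := by
    intro h
    rw [h, beta_zero_left hC] at hx₀1
    exact one_ne_zero hx₀1.symm
  have hT₀mem : rk C x₀ ∈ SC C := rk_mem hC x₀
  have hT₀ne : rk C x₀ ≠ 0 := rk_ne_zero hC hx₀
  have hPmem : φ (rk C x₀) ∈ SC C := phi_mem hφ hT₀mem
  have hInj : ∀ {X Y : H →L[ℂ] H}, X ∈ SC C → Y ∈ SC C → φ X = φ Y → X = Y :=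
    fun hX hY h => hφ.1.2.1 hX hY h
  have hPne : φ (rk C x₀) ≠ 0 := by
    intro h
    exact hT₀ne (hInj hT₀mem (SC_zero hC) (by rw [h, phi_zero hC hφ]))
  have hrank : ∀ Z ∈ SC C, ∃ c : ℂ, φ (rk C x₀) * Z * φ (rk C x₀) = c • φ (rk C x₀) := by
    intro Z hZ
    obtain ⟨W, hWmem, hWZ⟩ := hφ.1.2.2 hZ
    refine ⟨beta C x₀ (W x₀), ?_⟩
    rw [← hWZ, ← phi_triple hC hφ hT₀mem hWmem, ← phi_smul hC hφ hT₀mem,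
      rk_sandwich hC x₀ W]
  obtain ⟨y₀, hy₀ne, hPy₀⟩ := rank_one_char hC hPmem hPne hrank
  have hy₀1 : beta C y₀ y₀ = 1 := by
    have h1 : jmul (rk C x₀) (rk C x₀) = rk C x₀ := by
      rw [jmul_self, rk_mul_self hC, hx₀1, one_smul]
    have h2 : jmul (φ (rk C x₀)) (φ (rk C x₀)) = φ (rk C x₀) := by
      rw [← hφ.2.2.2 _ hT₀mem _ hT₀mem, h1]
    rw [hPy₀, jmul_self, rk_mul_self hC] at h2
    exact eq_of_smul_rk hC hy₀ne (h2.trans (one_smul ℂ (rk C y₀)).symm)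
  have hy₀C : C y₀ = y₀ := by
    have h1 : star (rk C x₀) = rk C x₀ := by rw [star_rk hC, hx₀C]
    have h2 : star (φ (rk C x₀)) = φ (rk C x₀) := by rw [← hφ.2.2.1 _ hT₀mem, h1]
    rw [hPy₀, star_rk hC] at h2
    have hCy₀ne : C y₀ ≠ 0 := fun h => hy₀ne ((C_eq_zero_iff hC).1 h)
    rcases rk_eq_rk hC hCy₀ne h2 with h' | h'
    · exact h'.symm
    · exfalso
      have h3 : C y₀ = - y₀ := by
        have h4 := congrArg (fun t : H => -t) h'
        simp only [neg_neg] at h4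
        exact h4.symm
      have h4 : beta C y₀ y₀ = - (inner ℂ y₀ y₀ : ℂ) := by
        unfold beta; rw [h3, inner_neg_left]
      rw [hy₀1] at h4
      have h5 : (inner ℂ y₀ y₀ : ℂ) = -1 := by linear_combination h4
      have h6 := inner_self_nonneg (𝕜 := ℂ) (x := y₀)
      rw [h5] at h6
      norm_num at h6
  have hQ : ∀ u, φ (rk C u) = rk C (Vmap C φ x₀ y₀ u) :=
    key_transport hC hφ hx₀1 hy₀1 hPy₀
  have hVadd : ∀ u v, Vmap C φ x₀ y₀ (u + v) = Vmap C φ x₀ y₀ u + Vmap C φ x₀ y₀ v :=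
    Vmap_add hC hφ x₀ y₀
  have hVsmul : ∀ (a : ℂ) (u : H), Vmap C φ x₀ y₀ (a • u) = a • Vmap C φ x₀ y₀ u :=
    Vmap_smul hC hφ x₀ y₀
  have hV0 : Vmap C φ x₀ y₀ 0 = 0 := Vmap_zero hC hφ x₀ y₀
  have hVx₀ : Vmap C φ x₀ y₀ x₀ = y₀ := Vmap_x₀ hC hφ hx₀1 hy₀1 hPy₀
  have hVne : ∀ u, u ≠ 0 → Vmap C φ x₀ y₀ u ≠ 0 := by
    intro u hu h0
    have h1 : φ (rk C u) = φ 0 := by rw [hQ u, h0, rk_zero, phi_zero hC hφ]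
    exact rk_ne_zero hC hu (hInj (rk_mem hC u) (SC_zero hC) h1)
  have hDsq : ∀ a u, (beta C (Vmap C φ x₀ y₀ a) (Vmap C φ x₀ y₀ u))^2 = (beta C a u)^2 := by
    intro a u
    by_cases ha : a = 0
    · rw [ha, hV0, beta_zero_left hC, beta_zero_left hC]
    have h2 := phi_triple hC hφ (rk_mem hC a) (rk_mem hC u)
    rw [rk_sandwich_rk hC a u, phi_smul hC hφ (rk_mem hC a), hQ, hQ,
      rk_sandwich_rk hC] at h2
    exact (eq_of_smul_rk hC (hVne a ha) h2).symm
  have hdich : ∀ a, (∀ z, beta C (Vmap C φ x₀ y₀ a) (Vmap C φ x₀ y₀ z) - beta C a z = 0) ∨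
      (∀ z, beta C (Vmap C φ x₀ y₀ a) (Vmap C φ x₀ y₀ z) + beta C a z = 0) := by
    intro a
    refine additive_mul_eq_zero ?_ ?_ ?_
    · intro z w; rw [hVadd, beta_add_right, beta_add_right]; ring
    · intro z w; rw [hVadd, beta_add_right, beta_add_right]; ring
    · intro z; linear_combination hDsq a z
  have hVV1 : beta C (Vmap C φ x₀ y₀ x₀) (Vmap C φ x₀ y₀ x₀) = 1 := by rw [hVx₀]; exact hy₀1
  have hx₀dich : ∀ z, beta C (Vmap C φ x₀ y₀ x₀) (Vmap C φ x₀ y₀ z) = beta C x₀ z := by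
    rcases hdich x₀ with h | h
    · intro z; linear_combination h z
    · exfalso
      have h3 := h x₀
      have h4 : (2:ℂ) = 0 := by linear_combination h3 - hVV1 - hx₀1
      norm_num at h4
  have hD : ∀ a u, beta C (Vmap C φ x₀ y₀ a) (Vmap C φ x₀ y₀ u) = beta C a u := by
    intro a u
    rcases hdich a with h | h
    · linear_combination h u
    · have hneg : ∀ z, beta C (Vmap C φ x₀ y₀ a) (Vmap C φ x₀ y₀ z) = - beta C a z := by
        intro z; linear_combination h z
      rcases hdich (a + x₀) with h2 | h2
      · have hzero : ∀ z, beta C a z = 0 := by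
          intro z
          have h3 := h2 z
          rw [hVadd, beta_add_left hC, beta_add_left hC] at h3
          linear_combination - h3/2 + (hneg z)/2 + (hx₀dich z)/2
        rw [hneg u, hzero u]
        simp
      · exfalso
        have h3 := h2 x₀
        rw [hVadd, beta_add_left hC, beta_add_left hC] at h3
        have h4 : (2:ℂ) = 0 := by linear_combination h3 - hneg x₀ - hVV1 - hx₀1
        norm_num at h4
  have hLrel : ∀ u, rk C (Vmap C φ x₀ y₀ (C u)) = rk C (C (Vmap C φ x₀ y₀ u)) := by
    intro u
    have h2 := hφ.2.2.1 _ (rk_mem hC u)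
    rw [star_rk hC, hQ, hQ, star_rk hC] at h2
    exact h2
  have hLx₀ : C (Vmap C φ x₀ y₀ (C x₀)) = Vmap C φ x₀ y₀ x₀ := by
    rw [hx₀C, hVx₀, hy₀C]
  have hptw : ∀ u, u ≠ 0 → C (Vmap C φ x₀ y₀ (C u)) = Vmap C φ x₀ y₀ u ∨
      C (Vmap C φ x₀ y₀ (C u)) = - Vmap C φ x₀ y₀ u := by
    intro u hu
    have hCu : C u ≠ 0 := fun h => hu ((C_eq_zero_iff hC).1 h)
    rcases rk_eq_rk hC (hVne _ hCu) (hLrel u) with h' | h'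
    · left; rw [← h', C_C hC]
    · right
      have h4 := congrArg C h'
      rw [C_C hC, C_neg hC] at h4
      rw [h4, neg_neg]
  have hL : ∀ u, C (Vmap C φ x₀ y₀ (C u)) = Vmap C φ x₀ y₀ u := by
    intro u
    by_cases hu : u = 0
    · rw [hu, C_zero hC, hV0, C_zero hC]
    rcases hptw u hu with h | h
    · exact h
    by_cases hux : u = -x₀
    · rw [hux, C_neg hC, hx₀C, Vmap_neg hC hφ, hVx₀, C_neg hC, hy₀C]
    · exfalso
      have hx : u + x₀ ≠ 0 := fun hh => hux (eq_neg_of_add_eq_zero_left hh)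
      rcases hptw (u + x₀) hx with h2 | h2
      · rw [C_add hC, hVadd, C_add hC, hVadd, h, hLx₀] at h2
        have h4 : - Vmap C φ x₀ y₀ u = Vmap C φ x₀ y₀ u := add_right_cancel h2
        have h6 : (2:ℂ) • Vmap C φ x₀ y₀ u = 0 := by
          rw [two_smul]
          nth_rewrite 1 [← h4]
          simp
        rcases smul_eq_zero.1 h6 with h7 | h7
        · norm_num at h7
        · exact hVne u hu h7
      · rw [C_add hC, hVadd, C_add hC, hVadd, h, hLx₀] at h2
        rw [neg_add] at h2
        have h4 : Vmap C φ x₀ y₀ x₀ = - Vmap C φ x₀ y₀ x₀ := add_left_cancel h2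
        have h6 : (2:ℂ) • Vmap C φ x₀ y₀ x₀ = 0 := by
          rw [two_smul]
          nth_rewrite 1 [h4]
          simp
        rcases smul_eq_zero.1 h6 with h7 | h7
        · norm_num at h7
        · rw [hVx₀] at h7; exact hy₀ne h7
  have hVC : ∀ u, C (Vmap C φ x₀ y₀ u) = Vmap C φ x₀ y₀ (C u) := by
    intro u
    have h := hL (C u)
    rwa [C_C hC] at h
  have hinner : ∀ u v, (inner ℂ (Vmap C φ x₀ y₀ u) (Vmap C φ x₀ y₀ v) : ℂ) = inner ℂ u v := by
    intro u v
    have h1 : (inner ℂ (Vmap C φ x₀ y₀ u) (Vmap C φ x₀ y₀ v) : ℂ)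
        = beta C (C (Vmap C φ x₀ y₀ u)) (Vmap C φ x₀ y₀ v) := by
      unfold beta; rw [C_C hC]
    rw [h1, hVC, hD]
    unfold beta; rw [C_C hC]
  have hVnorm : ∀ u, ‖Vmap C φ x₀ y₀ u‖ = ‖u‖ := by
    intro u
    have h1 := hinner u u
    rw [inner_self_eq_norm_sq_to_K, inner_self_eq_norm_sq_to_K] at h1
    have hr : (‖Vmap C φ x₀ y₀ u‖^2 : ℝ) = (‖u‖^2 : ℝ) := by exact_mod_cast h1
    calc ‖Vmap C φ x₀ y₀ u‖ = Real.sqrt (‖Vmap C φ x₀ y₀ u‖^2) :=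
          (Real.sqrt_sq (norm_nonneg _)).symm
      _ = Real.sqrt (‖u‖^2) := by rw [hr]
      _ = ‖u‖ := Real.sqrt_sq (norm_nonneg _)
  let Vl : H →ₗ[ℂ] H :=
    { toFun := Vmap C φ x₀ y₀
      map_add' := hVadd
      map_smul' := fun a u => hVsmul a u }
  let Vc : H →L[ℂ] H := LinearMap.mkContinuous Vl 1
    (fun u => le_of_eq (by rw [show Vl u = Vmap C φ x₀ y₀ u from rfl, hVnorm u, one_mul]))
  have hVcapp : ∀ u, Vc u = Vmap C φ x₀ y₀ u := fun u => rfl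
  have hadjV : ∀ u, ContinuousLinearMap.adjoint Vc (Vc u) = u := by
    intro u
    refine ext_inner_right ℂ fun v => ?_
    rw [ContinuousLinearMap.adjoint_inner_left]
    exact hinner u v
  have hsurj : ∀ w, ∃ z, Vc z = w := by
    intro w
    by_cases hw : w = 0
    · exact ⟨0, by rw [hw]; exact map_zero Vc⟩
    obtain ⟨X, hXmem, hXw⟩ := hφ.1.2.2 (rk_mem hC w)
    have hXne : X ≠ 0 := by
      intro h0
      rw [h0, phi_zero hC hφ] at hXw
      exact rk_ne_zero hC hw hXw.symm
    have hXr : ∀ Z ∈ SC C, ∃ c : ℂ, X * Z * X = c • X := by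
      intro Z hZ
      refine ⟨beta C w (φ Z w), hInj (SC_mul3 hC hXmem hZ) (SC_smul hC hXmem _) ?_⟩
      rw [phi_triple hC hφ hXmem hZ, hXw, rk_sandwich hC, phi_smul hC hφ hXmem, hXw]
    obtain ⟨z, hzne, hXz⟩ := rank_one_char hC hXmem hXne hXr
    have hrkz : rk C (Vmap C φ x₀ y₀ z) = rk C w := by rw [← hQ, ← hXz, hXw]
    rcases rk_eq_rk hC (hVne z hzne) hrkz with h' | h'
    · exact ⟨z, by rw [hVcapp]; exact h'.symm⟩
    · refine ⟨-z, ?_⟩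
      rw [map_neg, hVcapp, h']
  have h1u : star Vc * Vc = 1 := by
    ext u
    rw [ContinuousLinearMap.mul_apply, ContinuousLinearMap.one_apply,
      ContinuousLinearMap.star_eq_adjoint]
    exact hadjV u
  have h2u : Vc * star Vc = 1 := by
    ext w
    obtain ⟨z, hz⟩ := hsurj w
    rw [ContinuousLinearMap.mul_apply, ContinuousLinearMap.one_apply,
      ContinuousLinearMap.star_eq_adjoint, ← hz, hadjV z]
  have hVunit : Vc ∈ unitary (H →L[ℂ] H) := Unitary.mem_iff.2 ⟨h1u, h2u⟩
  have hVcC : ∀ x, C (Vc x) = Vc (C x) := fun x => hVC x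
  refine ⟨Vc, hVunit, hVcC, ?_⟩
  intro X hX
  have hYmem : Vc * X * star Vc ∈ SC C :=
    conj_mem hC hVcC (starV_comm hC hVunit hVcC) hX
  have hDmem : φ X - Vc * X * star Vc ∈ SC C := SC_sub hC (phi_mem hφ hX) hYmem
  have hstarVcVf : ∀ u, star Vc (Vmap C φ x₀ y₀ u) = u := by
    intro u
    rw [← hVcapp u, ContinuousLinearMap.star_eq_adjoint]
    exact hadjV u
  have hdiag : ∀ u, beta C (Vmap C φ x₀ y₀ u) (φ X (Vmap C φ x₀ y₀ u)) = beta C u (X u) := by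
    intro u
    by_cases hu : u = 0
    · rw [hu, hV0, beta_zero_left hC, beta_zero_left hC]
    have h1 := phi_triple hC hφ (rk_mem hC u) hX
    rw [rk_sandwich hC u X, phi_smul hC hφ (rk_mem hC u), hQ, rk_sandwich hC] at h1
    exact (eq_of_smul_rk hC (hVne u hu) h1).symm
  have hdiag2 : ∀ u, beta C (Vmap C φ x₀ y₀ u) ((Vc * X * star Vc) (Vmap C φ x₀ y₀ u))
      = beta C u (X u) := by
    intro u
    have hc1 : (Vc * X * star Vc) (Vmap C φ x₀ y₀ u) = Vmap C φ x₀ y₀ (X u) := by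
      rw [ContinuousLinearMap.mul_apply, ContinuousLinearMap.mul_apply, hstarVcVf u, hVcapp]
    rw [hc1, hD]
  have hDdiag : ∀ w, beta C w ((φ X - Vc * X * star Vc) w) = 0 := by
    intro w
    obtain ⟨z, hz⟩ := hsurj w
    rw [← hz, hVcapp z, ContinuousLinearMap.sub_apply, beta_sub_right, hdiag z, hdiag2 z,
      sub_self]
  have hDoff : ∀ w z, beta C w ((φ X - Vc * X * star Vc) z) = 0 := by
    intro w z
    have h1 := hDdiag (w + z)
    have h2 := hDdiag w
    have h3 := hDdiag z
    have hsym : beta C z ((φ X - Vc * X * star Vc) w)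
        = beta C w ((φ X - Vc * X * star Vc) z) := by
      calc beta C z ((φ X - Vc * X * star Vc) w)
          = beta C ((φ X - Vc * X * star Vc) z) w := (SC_beta hC hDmem z w).symm
        _ = beta C w ((φ X - Vc * X * star Vc) z) := beta_symm hC _ _
    rw [map_add, beta_add_left hC, beta_add_right, beta_add_right] at h1
    linear_combination h1/2 - h2/2 - h3/2 - hsym/2
  have hDzero : φ X - Vc * X * star Vc = 0 := by
    ext z
    rw [ContinuousLinearMap.zero_apply]
    have h0 := hDoff (C ((φ X - Vc * X * star Vc) z)) z
    unfold beta at h0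
    rw [C_C hC] at h0
    exact inner_self_eq_zero.1 h0
  exact sub_eq_zero.1 hDzero

end Aux2

/-- `φ` is a Jordan automorphism of `S_C` iff `φ(X) = V X V*` on `S_C` for some
unitary `V` commuting with `C`. -/
theorem stmt9 {H : Type*} [NormedAddCommGroup H] [InnerProductSpace ℂ H] [CompleteSpace H]
    [TopologicalSpace.SeparableSpace H] (hdim : ¬ FiniteDimensional ℂ H)
    (C : H → H) (hC : IsConjugation C) (φ : (H →L[ℂ] H) → (H →L[ℂ] H)) :
    IsJordanAutoOf C φ ↔
      ∃ V : H →L[ℂ] H, V ∈ unitary (H →L[ℂ] H) ∧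
        (∀ x : H, C (V x) = V (C x)) ∧
        ∀ X ∈ SC C, φ X = V * X * star V := by
  constructor
  · intro hφ
    have hne : ∃ x : H, x ≠ 0 := by
      by_contra h
      push_neg at h
      haveI hsub : Subsingleton H := ⟨fun a b => by rw [h a, h b]⟩
      exact hdim (Module.Finite.of_basis (Module.Basis.empty (ι := Empty) (R := ℂ) H))
    exact fwd hC hne hφ
  · rintro ⟨V, hV, hVC, hφV⟩
    exact bwd hC hV hVC hφV
end
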